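/- arXiv:math/0703869 — 7 statements merged into one kernel-verified Lean document; each statement's English description precedes it below -/
import Mathlib

section
/- Let U be a group and τ : U → U an involutive automorphism. Suppose the tuple (a₁,b₁,…,a_g,b_g,c₁,…,c_l) ∈ U^{2g+l} satisfies [a₁,b₁]⋯[a_g,b_g]·c₁⋯c_l = 1. Then the tuple is decomposable if and only if there exists φ ∈ U with τ(φ⁻¹) = φ such that β(a₁,…,c_l) = (φa₁φ⁻¹, φb₁φ⁻¹, …, φc_lφ⁻¹) is the tuple obtained by simultaneously conjugating every component by φ. -/
namespace Stmt0

variable {U : Type*}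

/-- The commutator `[a,b] = a b a⁻¹ b⁻¹`. -/
def gcomm [Group U] (a b : U) : U := a * b * a⁻¹ * b⁻¹

/-- Ordered product `f i * f (i+1) * ⋯ * f (n-1)`. -/
def oprod [Monoid U] (f : ℕ → U) (i n : ℕ) : U := ((List.range' i (n - i)).map f).prod

/-- `P_i = [a_{i+1},b_{i+1}] ⋯ [a_g,b_g] · c₁ ⋯ c_l` (0-based indices). -/
def Pf [Group U] (g l : ℕ) (a b c : ℕ → U) (i : ℕ) : U :=
  oprod (fun k => gcomm (a k) (b k)) (i + 1) g * oprod c 0 l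

/-- `Q_j = c_{j+1} ⋯ c_l` (0-based indices). -/
def Qf [Monoid U] (l : ℕ) (c : ℕ → U) (j : ℕ) : U := oprod c (j + 1) l

/-- The `aᵢ`-component of the involution `β`: `a′_i = τ(P_i)⁻¹ τ(b_i) τ(P_i)`. -/
def betaA [Group U] (τ : U ≃* U) (g l : ℕ) (a b c : ℕ → U) (i : ℕ) : U :=
  (τ (Pf g l a b c i))⁻¹ * τ (b i) * τ (Pf g l a b c i)

/-- The `bᵢ`-component of the involution `β`: `b′_i = τ(P_i)⁻¹ τ(a_i) τ(P_i)`. -/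
def betaB [Group U] (τ : U ≃* U) (g l : ℕ) (a b c : ℕ → U) (i : ℕ) : U :=
  (τ (Pf g l a b c i))⁻¹ * τ (a i) * τ (Pf g l a b c i)

/-- The `cⱼ`-component of the involution `β`: `c′_j = τ(Q_j)⁻¹ τ(c_j⁻¹) τ(Q_j)`. -/
def betaC [Group U] (τ : U ≃* U) (l : ℕ) (c : ℕ → U) (j : ℕ) : U :=
  (τ (Qf l c j))⁻¹ * τ (c j)⁻¹ * τ (Qf l c j)

/-- The momentum map `μ(a,b,c) = [a₁,b₁]⋯[a_g,b_g]·c₁⋯c_l`. -/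
def muMap [Group U] (g l : ℕ) (a b c : ℕ → U) : U :=
  oprod (fun k => gcomm (a k) (b k)) 0 g * oprod c 0 l

/-- A tuple `(a₁,b₁,…,a_g,b_g,c₁,…,c_l)` is decomposable: there are
`v₁,…,v_g,w₁,…,w_l ∈ Fix(τ⁻)` (encoded as the single cyclic list
`s 0,…,s (g+l-1)`, with `v_i = s (i-1)`, `w_j = s (g+j-1)`, and the cyclic
conventions `v_{g+1} := w₁`, `w_{l+1} := v₁` realized by reduction mod `g+l`)
with `[a_i,b_i] = v_i v_{i+1}⁻¹`, `c_j = w_j w_{j+1}⁻¹`, and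
`τ(a_i) = v_{i+1}⁻¹ b_i v_{i+1}`. -/
def Decomposable [Group U] (τ : U ≃* U) (g l : ℕ) (a b c : ℕ → U) : Prop :=
  ∃ s : ℕ → U,
    (∀ k, k < g + l → τ (s k)⁻¹ = s k) ∧
    (∀ i, i < g → gcomm (a i) (b i) = s i * (s ((i + 1) % (g + l)))⁻¹) ∧
    (∀ j, j < l → c j = s (g + j) * (s ((g + j + 1) % (g + l)))⁻¹) ∧
    (∀ i, i < g → τ (a i) = (s ((i + 1) % (g + l)))⁻¹ * b i * s ((i + 1) % (g + l)))

section Aux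

variable [Group U]

lemma oprod_succ_left (f : ℕ → U) {i n : ℕ} (h : i < n) :
    oprod f i n = f i * oprod f (i + 1) n := by
  unfold oprod
  have h1 : n - i = (n - (i + 1)) + 1 := by omega
  rw [h1, List.range'_succ, List.map_cons, List.prod_cons]

lemma oprod_of_le (f : ℕ → U) {i n : ℕ} (h : n ≤ i) : oprod f i n = 1 := by
  unfold oprod
  have h1 : n - i = 0 := by omega
  simp [h1]

/-- The tail product `T_k`, unifying the `P_i` and `Q_j`. -/
def Tf (g l : ℕ) (a b c : ℕ → U) (k : ℕ) : U :=
  oprod (fun m => gcomm (a m) (b m)) k g * oprod c (k - g) l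

lemma Tf_zero (g l : ℕ) (a b c : ℕ → U) : Tf g l a b c 0 = muMap g l a b c := by
  simp [Tf, muMap]

lemma Tf_top (g l : ℕ) (a b c : ℕ → U) : Tf g l a b c (g + l) = 1 := by
  unfold Tf
  rw [oprod_of_le _ (by omega), oprod_of_le _ (by omega), one_mul]

lemma Tf_comm (g l : ℕ) (a b c : ℕ → U) {i : ℕ} (h : i < g) :
    Tf g l a b c i = gcomm (a i) (b i) * Tf g l a b c (i + 1) := by
  unfold Tf
  rw [oprod_succ_left _ h]
  have h1 : i - g = 0 := by omega
  have h2 : i + 1 - g = 0 := by omega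
  rw [h1, h2, mul_assoc]

lemma Tf_c (g l : ℕ) (a b c : ℕ → U) {j : ℕ} (h : j < l) :
    Tf g l a b c (g + j) = c j * Tf g l a b c (g + j + 1) := by
  unfold Tf
  rw [oprod_of_le (fun m => gcomm (a m) (b m)) (by omega),
      oprod_of_le (fun m => gcomm (a m) (b m)) (by omega)]
  have h1 : g + j - g = j := by omega
  have h2 : g + j + 1 - g = j + 1 := by omega
  rw [h1, h2, oprod_succ_left c h, one_mul, one_mul]

lemma Pf_eq_Tf (g l : ℕ) (a b c : ℕ → U) {i : ℕ} (h : i < g) :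
    Pf g l a b c i = Tf g l a b c (i + 1) := by
  unfold Pf Tf
  have h2 : i + 1 - g = 0 := by omega
  rw [h2]

lemma Qf_eq_Tf (g l : ℕ) (a b c : ℕ → U) (j : ℕ) :
    Qf l c j = Tf g l a b c (g + j + 1) := by
  unfold Qf Tf
  rw [oprod_of_le (fun m => gcomm (a m) (b m)) (by omega)]
  have h2 : g + j + 1 - g = j + 1 := by omega
  rw [h2, one_mul]

end Aux

/-- **Characterization of decomposable representations.**  If the tuple
`(a₁,b₁,…,a_g,b_g,c₁,…,c_l)` satisfies `[a₁,b₁]⋯[a_g,b_g]·c₁⋯c_l = 1`, then it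
is decomposable iff there is `φ ∈ U` with `τ(φ⁻¹) = φ` such that `β` of the
tuple is the tuple conjugated componentwise by `φ`. -/
theorem characterization_of_decomposable [Group U] (τ : U ≃* U)
    (hτ : ∀ u : U, τ (τ u) = u) (g l : ℕ) (a b c : ℕ → U)
    (hrel : muMap g l a b c = 1) :
    Decomposable τ g l a b c ↔
      ∃ φ : U, τ φ⁻¹ = φ ∧
        (∀ i, i < g → betaA τ g l a b c i = φ * a i * φ⁻¹) ∧
        (∀ i, i < g → betaB τ g l a b c i = φ * b i * φ⁻¹) ∧
        (∀ j, j < l → betaC τ l c j = φ * c j * φ⁻¹) := by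
  constructor
  · rintro ⟨s, hfix, hab, hc, ha⟩
    by_cases hn : g + l = 0
    · exact ⟨1, by simp, fun i hi => by omega, fun i hi => by omega, fun j hj => by omega⟩
    have hn' : 0 < g + l := Nat.pos_of_ne_zero hn
    have hfix' : ∀ k, k < g + l → τ (s k) = (s k)⁻¹ := fun k hk => by
      have h := hfix k hk
      rw [map_inv] at h
      simpa using congrArg Inv.inv h
    have key : ∀ k, k ≤ g + l → Tf g l a b c k = s (k % (g + l)) * (s 0)⁻¹ := by
      intro k
      induction k with
      | zero =>
        intro _
        rw [Tf_zero, hrel, Nat.zero_mod]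
        simp
      | succ k ih =>
        intro hk1
        have hk : k < g + l := by omega
        have ihk := ih (le_of_lt hk)
        rw [Nat.mod_eq_of_lt hk] at ihk
        by_cases hkg : k < g
        · have h1 : Tf g l a b c (k + 1) = (gcomm (a k) (b k))⁻¹ * Tf g l a b c k := by
            rw [Tf_comm g l a b c hkg]; group
          rw [h1, ihk, hab k hkg]; group
        · have hj : k - g < l := by omega
          have hgj : g + (k - g) = k := by omega
          have h1 := Tf_c g l a b c hj
          rw [hgj] at h1
          have h2 := hc (k - g) hj
          rw [hgj] at h2
          have h3 : Tf g l a b c (k + 1) = (c (k - g))⁻¹ * Tf g l a b c k := by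
            rw [h1]; group
          rw [h3, ihk, h2]; group
    refine ⟨(s 0)⁻¹, by simp [hfix' 0 hn'], ?_, ?_, ?_⟩
    · intro i hi
      have hm : (i + 1) % (g + l) < g + l := Nat.mod_lt _ hn'
      have hτP : τ (Pf g l a b c i) = (s ((i + 1) % (g + l)))⁻¹ * s 0 := by
        rw [Pf_eq_Tf g l a b c hi, key (i + 1) (by omega), map_mul, map_inv,
          hfix' _ hm, hfix' 0 hn', inv_inv]
      have hA : a i = s ((i + 1) % (g + l)) * τ (b i) * (s ((i + 1) % (g + l)))⁻¹ := by
        have h := congrArg τ (ha i hi)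
        rw [hτ] at h
        rw [h, map_mul, map_mul, map_inv, hfix' _ hm, inv_inv]
      simp only [betaA]
      rw [hτP, hA]; group
    · intro i hi
      have hm : (i + 1) % (g + l) < g + l := Nat.mod_lt _ hn'
      have hτP : τ (Pf g l a b c i) = (s ((i + 1) % (g + l)))⁻¹ * s 0 := by
        rw [Pf_eq_Tf g l a b c hi, key (i + 1) (by omega), map_mul, map_inv,
          hfix' _ hm, hfix' 0 hn', inv_inv]
      simp only [betaB]
      rw [hτP, ha i hi]; group
    · intro j hj
      have hm : (g + j + 1) % (g + l) < g + l := Nat.mod_lt _ hn'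
      have hmj : g + j < g + l := by omega
      have hτQ : τ (Qf l c j) = (s ((g + j + 1) % (g + l)))⁻¹ * s 0 := by
        rw [Qf_eq_Tf g l a b c j, key (g + j + 1) (by omega), map_mul, map_inv,
          hfix' _ hm, hfix' 0 hn', inv_inv]
      have hτc : τ (c j) = (s (g + j))⁻¹ * s ((g + j + 1) % (g + l)) := by
        rw [hc j hj, map_mul, map_inv, hfix' _ hmj, hfix' _ hm, inv_inv]
      simp only [betaC, map_inv]
      rw [hτQ, hτc, hc j hj]; group
  · rintro ⟨φ, hφ, hA, hB, hC⟩
    have hφ' : (τ φ)⁻¹ = φ := by rw [← map_inv]; exact hφ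
    have hτφ : τ φ = φ⁻¹ := by simpa using congrArg Inv.inv hφ'
    have key : ∀ m k, k ≤ g + l → g + l - k = m →
        τ (Tf g l a b c k) = φ * (Tf g l a b c k)⁻¹ * φ⁻¹ := by
      intro m
      induction m with
      | zero =>
        intro k hk hm
        have : k = g + l := by omega
        subst this
        rw [Tf_top]; simp
      | succ m ih =>
        intro k hk hm
        have hk' : k < g + l := by omega
        have ih' := ih (k + 1) (by omega) (by omega)
        by_cases hkg : k < g
        · have hAk := hA k hkg
          have hBk := hB k hkg
          simp only [betaA, Pf_eq_Tf g l a b c hkg] at hAk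
          simp only [betaB, Pf_eq_Tf g l a b c hkg] at hBk
          rw [ih'] at hAk hBk
          have htb : τ (b k) = (φ * (Tf g l a b c (k + 1))⁻¹ * φ⁻¹) * (φ * a k * φ⁻¹) *
              (φ * (Tf g l a b c (k + 1))⁻¹ * φ⁻¹)⁻¹ := by
            rw [← hAk]; group
          have hta : τ (a k) = (φ * (Tf g l a b c (k + 1))⁻¹ * φ⁻¹) * (φ * b k * φ⁻¹) *
              (φ * (Tf g l a b c (k + 1))⁻¹ * φ⁻¹)⁻¹ := by
            rw [← hBk]; group
          rw [Tf_comm g l a b c hkg]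
          simp only [gcomm, map_mul, map_inv]
          rw [ih', hta, htb]
          group
        · have hj : k - g < l := by omega
          have hgj : g + (k - g) = k := by omega
          have hQ : Qf l c (k - g) = Tf g l a b c (k + 1) := by
            have h := Qf_eq_Tf g l a b c (k - g)
            rwa [hgj] at h
          have hCk := hC (k - g) hj
          simp only [betaC, hQ, map_inv] at hCk
          rw [ih'] at hCk
          have htc : τ (c (k - g)) = ((φ * (Tf g l a b c (k + 1))⁻¹ * φ⁻¹) *
              (φ * c (k - g) * φ⁻¹) * (φ * (Tf g l a b c (k + 1))⁻¹ * φ⁻¹)⁻¹)⁻¹ := by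
            rw [← hCk]; group
          have hTk : Tf g l a b c k = c (k - g) * Tf g l a b c (k + 1) := by
            have h := Tf_c g l a b c hj
            rwa [hgj] at h
          rw [hTk, map_mul, ih', htc]
          group
    have hmod : ∀ k, k < g + l →
        Tf g l a b c ((k + 1) % (g + l)) = Tf g l a b c (k + 1) := by
      intro k hk
      rcases Nat.lt_or_ge (k + 1) (g + l) with h | h
      · rw [Nat.mod_eq_of_lt h]
      · have h1 : k + 1 = g + l := by omega
        rw [h1, Nat.mod_self, Tf_zero, hrel, Tf_top]
    refine ⟨fun k => Tf g l a b c k * φ⁻¹, ?_, ?_, ?_, ?_⟩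
    · intro k hk
      show τ ((Tf g l a b c k * φ⁻¹)⁻¹) = Tf g l a b c k * φ⁻¹
      rw [map_inv, map_mul, map_inv, hτφ, key (g + l - k) k (by omega) rfl]
      group
    · intro i hi
      show gcomm (a i) (b i) =
        (Tf g l a b c i * φ⁻¹) * (Tf g l a b c ((i + 1) % (g + l)) * φ⁻¹)⁻¹
      rw [hmod i (by omega), Tf_comm g l a b c hi]
      group
    · intro j hj
      show c j =
        (Tf g l a b c (g + j) * φ⁻¹) * (Tf g l a b c ((g + j + 1) % (g + l)) * φ⁻¹)⁻¹
      rw [hmod (g + j) (by omega), Tf_c g l a b c hj]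
      group
    · intro i hi
      show τ (a i) = (Tf g l a b c ((i + 1) % (g + l)) * φ⁻¹)⁻¹ * b i *
        (Tf g l a b c ((i + 1) % (g + l)) * φ⁻¹)
      rw [hmod i (by omega)]
      have hBk := hB i hi
      simp only [betaB, Pf_eq_Tf g l a b c hi] at hBk
      rw [key (g + l - (i + 1)) (i + 1) (by omega) rfl] at hBk
      have hta : τ (a i) = (φ * (Tf g l a b c (i + 1))⁻¹ * φ⁻¹) * (φ * b i * φ⁻¹) *
          (φ * (Tf g l a b c (i + 1))⁻¹ * φ⁻¹)⁻¹ := by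
        rw [← hBk]; group
      rw [hta]; group

end Stmt0
end

section
/- Let U be a group, τ : U → U an involutive automorphism, and u ∈ U. A tuple (a₁,b₁,…,a_g,b_g,c₁,…,c_l) ∈ U^{2g+l} is decomposable if and only if the simultaneously conjugated tuple (u a₁ u⁻¹, u b₁ u⁻¹, …, u c_l u⁻¹) is decomposable. -/
namespace Stmt1

variable {U : Type*}

/-- The commutator `[a,b] = a b a⁻¹ b⁻¹`. -/
def gcomm [Group U] (a b : U) : U := a * b * a⁻¹ * b⁻¹

/-- Ordered product `f i * f (i+1) * ⋯ * f (n-1)`. -/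
def oprod [Monoid U] (f : ℕ → U) (i n : ℕ) : U := ((List.range' i (n - i)).map f).prod

/-- `P_i = [a_{i+1},b_{i+1}] ⋯ [a_g,b_g] · c₁ ⋯ c_l` (0-based indices). -/
def Pf [Group U] (g l : ℕ) (a b c : ℕ → U) (i : ℕ) : U :=
  oprod (fun k => gcomm (a k) (b k)) (i + 1) g * oprod c 0 l

/-- `Q_j = c_{j+1} ⋯ c_l` (0-based indices). -/
def Qf [Monoid U] (l : ℕ) (c : ℕ → U) (j : ℕ) : U := oprod c (j + 1) l

/-- The `aᵢ`-component of the involution `β`: `a′_i = τ(P_i)⁻¹ τ(b_i) τ(P_i)`. -/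
def betaA [Group U] (τ : U ≃* U) (g l : ℕ) (a b c : ℕ → U) (i : ℕ) : U :=
  (τ (Pf g l a b c i))⁻¹ * τ (b i) * τ (Pf g l a b c i)

/-- The `bᵢ`-component of the involution `β`: `b′_i = τ(P_i)⁻¹ τ(a_i) τ(P_i)`. -/
def betaB [Group U] (τ : U ≃* U) (g l : ℕ) (a b c : ℕ → U) (i : ℕ) : U :=
  (τ (Pf g l a b c i))⁻¹ * τ (a i) * τ (Pf g l a b c i)

/-- The `cⱼ`-component of the involution `β`: `c′_j = τ(Q_j)⁻¹ τ(c_j⁻¹) τ(Q_j)`. -/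
def betaC [Group U] (τ : U ≃* U) (l : ℕ) (c : ℕ → U) (j : ℕ) : U :=
  (τ (Qf l c j))⁻¹ * τ (c j)⁻¹ * τ (Qf l c j)

/-- The momentum map `μ(a,b,c) = [a₁,b₁]⋯[a_g,b_g]·c₁⋯c_l`. -/
def muMap [Group U] (g l : ℕ) (a b c : ℕ → U) : U :=
  oprod (fun k => gcomm (a k) (b k)) 0 g * oprod c 0 l

/-- A tuple `(a₁,b₁,…,a_g,b_g,c₁,…,c_l)` is decomposable: there are
`v₁,…,v_g,w₁,…,w_l ∈ Fix(τ⁻)` (encoded as the single cyclic list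
`s 0,…,s (g+l-1)`, with `v_i = s (i-1)`, `w_j = s (g+j-1)`, and the cyclic
conventions `v_{g+1} := w₁`, `w_{l+1} := v₁` realized by reduction mod `g+l`)
with `[a_i,b_i] = v_i v_{i+1}⁻¹`, `c_j = w_j w_{j+1}⁻¹`, and
`τ(a_i) = v_{i+1}⁻¹ b_i v_{i+1}`. -/
def Decomposable [Group U] (τ : U ≃* U) (g l : ℕ) (a b c : ℕ → U) : Prop :=
  ∃ s : ℕ → U,
    (∀ k, k < g + l → τ (s k)⁻¹ = s k) ∧
    (∀ i, i < g → gcomm (a i) (b i) = s i * (s ((i + 1) % (g + l)))⁻¹) ∧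
    (∀ j, j < l → c j = s (g + j) * (s ((g + j + 1) % (g + l)))⁻¹) ∧
    (∀ i, i < g → τ (a i) = (s ((i + 1) % (g + l)))⁻¹ * b i * s ((i + 1) % (g + l)))

theorem conj_conj [Group U] (u : U) (f : ℕ → U) :
    (fun i => u⁻¹ * ((fun i => u * f i * u⁻¹) i) * u⁻¹⁻¹) = f := by
  funext i; group


theorem decomposable_conj [Group U] (τ : U ≃* U)
    (hτ : ∀ x : U, τ (τ x) = x) (u : U) (g l : ℕ) (a b c : ℕ → U)
    (h : Decomposable τ g l a b c) :
    Decomposable τ g l (fun i => u * a i * u⁻¹) (fun i => u * b i * u⁻¹)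
        (fun j => u * c j * u⁻¹) := by
  obtain ⟨s, h1, h2, h3, h4⟩ := h
  refine ⟨fun k => u * s k * (τ u)⁻¹, fun k hk => ?_, fun i hi => ?_, fun j hj => ?_,
    fun i hi => ?_⟩
  · simp only [mul_inv_rev, map_mul, map_inv, hτ, inv_inv]
    rw [← map_inv τ (s k), h1 k hk]; group
  · have := h2 i hi
    simp only [gcomm] at this ⊢
    rw [show (u * a i * u⁻¹) * (u * b i * u⁻¹) * (u * a i * u⁻¹)⁻¹ * (u * b i * u⁻¹)⁻¹
        = u * (a i * b i * (a i)⁻¹ * (b i)⁻¹) * u⁻¹ by group, this]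
    group
  · show u * c j * u⁻¹ = _
    rw [h3 j hj]; group
  · simp only [map_mul, map_inv, h4 i hi]; group

/-- A tuple is decomposable iff the tuple obtained by simultaneously
conjugating every component by `u` is decomposable. -/
theorem decomposable_iff_conj_decomposable [Group U] (τ : U ≃* U)
    (hτ : ∀ x : U, τ (τ x) = x) (u : U) (g l : ℕ) (a b c : ℕ → U) :
    Decomposable τ g l a b c ↔
      Decomposable τ g l (fun i => u * a i * u⁻¹) (fun i => u * b i * u⁻¹)
        (fun j => u * c j * u⁻¹) := by
  constructor
  · exact decomposable_conj τ hτ u g l a b c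
  · intro h
    have h2 := decomposable_conj τ hτ u⁻¹ g l _ _ _ h
    have e : ∀ f : ℕ → U, (fun i => u⁻¹ * (u * f i * u⁻¹) * u⁻¹⁻¹) = f :=
      fun f => funext fun i => by group
    rwa [e, e, e] at h2

end Stmt1
end

section
/- Let U be a group and τ : U → U an involutive automorphism. Let M₁ and M₂ be sets with U-actions, and for i = 1, 2 let μ_i : M_i → U be equivariant maps (μ_i(u·x) = uμ_i(x)u⁻¹) and β_i : M_i → M_i involutions satisfying β_i(u·x) = τ(u)·β_i(x) and μ_i(β_i(x)) = τ(μ_i(x)⁻¹) for all u, x. Equip M := M₁ × M₂ with the diagonal U-action and μ(x₁,x₂) := μ₁(x₁)μ₂(x₂), and define β(x₁,x₂) := ( μ₂(β₂(x₂)) · β₁(x₁), β₂(x₂) ). Then: (1) β is an involution on M; (2) β(u·x) = τ(u)·β(x) for all u ∈ U, x ∈ M; (3) μ(β(x)) = τ(μ(x)⁻¹) for all x ∈ M; and (4) if β₁(x₁) = x₁, μ₁(x₁) = 1, β₂(x₂) = x₂ and μ₂(x₂) = 1, then β(x₁,x₂) = (x₁,x₂) and μ(x₁,x₂) = 1. 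-/
/-- Product construction of compatible involutions: if `βᵢ` are involutions on
`U`-sets `Mᵢ` compatible with `τ` and the equivariant maps `μᵢ`, then
`β(x₁,x₂) = (μ₂(β₂ x₂) • β₁ x₁, β₂ x₂)` is an involution on `M₁ × M₂`
(diagonal action) compatible with `τ` and `μ(x₁,x₂) = μ₁(x₁)μ₂(x₂)`, and it
fixes pairs of fixed points lying in the respective `μᵢ`-fibers of `1`. -/
theorem product_involution {U M₁ M₂ : Type*} [Group U] [MulAction U M₁]
    [MulAction U M₂] (τ : U ≃* U) (hτ : ∀ u : U, τ (τ u) = u)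
    (μ₁ : M₁ → U) (μ₂ : M₂ → U) (β₁ : M₁ → M₁) (β₂ : M₂ → M₂)
    (hβ₁ : ∀ x, β₁ (β₁ x) = x) (hβ₂ : ∀ x, β₂ (β₂ x) = x)
    (hc₁ : ∀ (u : U) (x : M₁), β₁ (u • x) = τ u • β₁ x)
    (hc₂ : ∀ (u : U) (x : M₂), β₂ (u • x) = τ u • β₂ x)
    (he₁ : ∀ (u : U) (x : M₁), μ₁ (u • x) = u * μ₁ x * u⁻¹)
    (he₂ : ∀ (u : U) (x : M₂), μ₂ (u • x) = u * μ₂ x * u⁻¹)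
    (hμβ₁ : ∀ x : M₁, μ₁ (β₁ x) = τ (μ₁ x)⁻¹)
    (hμβ₂ : ∀ x : M₂, μ₂ (β₂ x) = τ (μ₂ x)⁻¹) :
    (∀ p : M₁ × M₂,
      (μ₂ (β₂ (μ₂ (β₂ p.2) • β₁ p.1, β₂ p.2).2) •
          β₁ (μ₂ (β₂ p.2) • β₁ p.1, β₂ p.2).1,
        β₂ (μ₂ (β₂ p.2) • β₁ p.1, β₂ p.2).2) = p) ∧
    (∀ (u : U) (p : M₁ × M₂),
      (μ₂ (β₂ (u • p).2) • β₁ (u • p).1, β₂ (u • p).2)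
        = τ u • (μ₂ (β₂ p.2) • β₁ p.1, β₂ p.2)) ∧
    (∀ p : M₁ × M₂,
      μ₁ (μ₂ (β₂ p.2) • β₁ p.1) * μ₂ (β₂ p.2) = τ (μ₁ p.1 * μ₂ p.2)⁻¹) ∧
    (∀ p : M₁ × M₂, β₁ p.1 = p.1 → μ₁ p.1 = 1 → β₂ p.2 = p.2 → μ₂ p.2 = 1 →
      (μ₂ (β₂ p.2) • β₁ p.1, β₂ p.2) = p ∧ μ₁ p.1 * μ₂ p.2 = 1) := by
  refine ⟨?_, ?_, ?_, ?_⟩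
  · rintro ⟨x₁, x₂⟩
    simp only [hβ₂, hc₁, hμβ₂, hβ₁, hτ, smul_smul, inv_mul_cancel, mul_inv_cancel,
      one_smul, Prod.mk.injEq, and_true]
  · rintro u ⟨x₁, x₂⟩
    simp only [Prod.smul_mk, Prod.smul_def, hc₁, hc₂, he₂, smul_smul, Prod.mk.injEq]
    constructor
    · group
    · trivial
  · rintro ⟨x₁, x₂⟩
    simp only [he₁, hμβ₁, hμβ₂, mul_inv_rev, map_mul]
    group
  · rintro ⟨x₁, x₂⟩ h1 h2 h3 h4
    simp_all
end

section
/- Let U be a group, τ : U → U an involutive automorphism, and g, l ≥ 0. Let β : U^{2g+l} → U^{2g+l} be the map of the context and let μ(a,b,c) := [a₁,b₁]⋯[a_g,b_g]·c₁⋯c_l. Then: (1) β is an involution (β ∘ β = id); (2) β(u a₁ u⁻¹, u b₁ u⁻¹, …, u c_l u⁻¹) = τ(u)·β(a₁,b₁,…,c_l) for every u ∈ U, where τ(u) acts by simultaneous conjugation on all components; and (3) μ(β(a,b,c)) = τ(μ(a,b,c)⁻¹) for every tuple. -/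
namespace Stmt9

variable {U : Type*}

/-- The commutator `[a,b] = a b a⁻¹ b⁻¹`. -/
def gcomm [Group U] (a b : U) : U := a * b * a⁻¹ * b⁻¹

/-- Ordered product `f i * f (i+1) * ⋯ * f (n-1)`. -/
def oprod [Monoid U] (f : ℕ → U) (i n : ℕ) : U := ((List.range' i (n - i)).map f).prod

/-- `P_i = [a_{i+1},b_{i+1}] ⋯ [a_g,b_g] · c₁ ⋯ c_l` (0-based indices). -/
def Pf [Group U] (g l : ℕ) (a b c : ℕ → U) (i : ℕ) : U :=
  oprod (fun k => gcomm (a k) (b k)) (i + 1) g * oprod c 0 l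

/-- `Q_j = c_{j+1} ⋯ c_l` (0-based indices). -/
def Qf [Monoid U] (l : ℕ) (c : ℕ → U) (j : ℕ) : U := oprod c (j + 1) l

/-- The `aᵢ`-component of the involution `β`: `a′_i = τ(P_i)⁻¹ τ(b_i) τ(P_i)`. -/
def betaA [Group U] (τ : U ≃* U) (g l : ℕ) (a b c : ℕ → U) (i : ℕ) : U :=
  (τ (Pf g l a b c i))⁻¹ * τ (b i) * τ (Pf g l a b c i)

/-- The `bᵢ`-component of the involution `β`: `b′_i = τ(P_i)⁻¹ τ(a_i) τ(P_i)`. -/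
def betaB [Group U] (τ : U ≃* U) (g l : ℕ) (a b c : ℕ → U) (i : ℕ) : U :=
  (τ (Pf g l a b c i))⁻¹ * τ (a i) * τ (Pf g l a b c i)

/-- The `cⱼ`-component of the involution `β`: `c′_j = τ(Q_j)⁻¹ τ(c_j⁻¹) τ(Q_j)`. -/
def betaC [Group U] (τ : U ≃* U) (l : ℕ) (c : ℕ → U) (j : ℕ) : U :=
  (τ (Qf l c j))⁻¹ * τ (c j)⁻¹ * τ (Qf l c j)

/-- The momentum map `μ(a,b,c) = [a₁,b₁]⋯[a_g,b_g]·c₁⋯c_l`. -/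
def muMap [Group U] (g l : ℕ) (a b c : ℕ → U) : U :=
  oprod (fun k => gcomm (a k) (b k)) 0 g * oprod c 0 l

/-- A tuple `(a₁,b₁,…,a_g,b_g,c₁,…,c_l)` is decomposable: there are
`v₁,…,v_g,w₁,…,w_l ∈ Fix(τ⁻)` (encoded as the single cyclic list
`s 0,…,s (g+l-1)`, with `v_i = s (i-1)`, `w_j = s (g+j-1)`, and the cyclic
conventions `v_{g+1} := w₁`, `w_{l+1} := v₁` realized by reduction mod `g+l`)
with `[a_i,b_i] = v_i v_{i+1}⁻¹`, `c_j = w_j w_{j+1}⁻¹`, and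
`τ(a_i) = v_{i+1}⁻¹ b_i v_{i+1}`. -/
def Decomposable [Group U] (τ : U ≃* U) (g l : ℕ) (a b c : ℕ → U) : Prop :=
  ∃ s : ℕ → U,
    (∀ k, k < g + l → τ (s k)⁻¹ = s k) ∧
    (∀ i, i < g → gcomm (a i) (b i) = s i * (s ((i + 1) % (g + l)))⁻¹) ∧
    (∀ j, j < l → c j = s (g + j) * (s ((g + j + 1) % (g + l)))⁻¹) ∧
    (∀ i, i < g → τ (a i) = (s ((i + 1) % (g + l)))⁻¹ * b i * s ((i + 1) % (g + l)))


section Aux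
variable [Group U]

lemma oprod_eq_one (f : ℕ → U) {i n : ℕ} (h : n ≤ i) : oprod f i n = 1 := by
  simp [oprod, Nat.sub_eq_zero_of_le h]

lemma oprod_cons (f : ℕ → U) {i n : ℕ} (h : i < n) :
    oprod f i n = f i * oprod f (i + 1) n := by
  unfold oprod
  have h1 : n - i = (n - (i + 1)) + 1 := by omega
  rw [h1, List.range'_succ]
  simp

lemma oprod_telescope (f T : ℕ → U) :
    ∀ d i n, n = i + d → (∀ k, i ≤ k → k < n → f k = (T k)⁻¹ * T (k + 1)) →
      oprod f i n = (T i)⁻¹ * T n := by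
  intro d
  induction d with
  | zero => intro i n hn _; subst hn; simp [oprod_eq_one f (le_refl _)]
  | succ d ih =>
    intro i n hn hf
    subst hn
    rw [show i + (d + 1) = (i + 1) + d from by omega] at hf ⊢
    rw [oprod_cons f (by omega), hf i le_rfl (by omega),
      ih (i + 1) ((i + 1) + d) rfl (fun k hk1 hk2 => hf k (by omega) (by omega))]
    group

lemma oprod_conj_aux (f : ℕ → U) (u : U) :
    ∀ d i n, n = i + d →
      oprod (fun k => u * f k * u⁻¹) i n = u * oprod f i n * u⁻¹ := by
  intro d
  induction d with
  | zero => intro i n hn; subst hn; simp [oprod_eq_one]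
  | succ d ih =>
    intro i n hn; subst hn
    rw [show i + (d + 1) = (i + 1) + d from by omega]
    rw [oprod_cons _ (by omega), oprod_cons f (by omega), ih (i + 1) ((i + 1) + d) rfl]
    group

lemma oprod_conj (f : ℕ → U) (u : U) (i n : ℕ) :
    oprod (fun k => u * f k * u⁻¹) i n = u * oprod f i n * u⁻¹ := by
  rcases le_or_gt i n with h | h
  · exact oprod_conj_aux f u (n - i) i n (by omega)
  · rw [oprod_eq_one _ h.le, oprod_eq_one f h.le]; simp

lemma Pf_conj (g l : ℕ) (a b c : ℕ → U) (u : U) (i : ℕ) :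
    Pf g l (fun k => u * a k * u⁻¹) (fun k => u * b k * u⁻¹) (fun k => u * c k * u⁻¹) i
      = u * Pf g l a b c i * u⁻¹ := by
  unfold Pf
  have h1 : (fun k => gcomm (u * a k * u⁻¹) (u * b k * u⁻¹))
      = fun k => u * gcomm (a k) (b k) * u⁻¹ := by
    funext k; unfold gcomm; group
  rw [h1, oprod_conj _ u (i + 1) g, oprod_conj c u 0 l]
  group

lemma Qf_conj (l : ℕ) (c : ℕ → U) (u : U) (j : ℕ) :
    Qf l (fun k => u * c k * u⁻¹) j = u * Qf l c j * u⁻¹ :=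
  oprod_conj c u (j + 1) l

lemma betaC_eq (τ : U ≃* U) (l : ℕ) (c : ℕ → U) {j : ℕ} (hj : j < l) :
    betaC τ l c j = (τ (oprod c j l))⁻¹ * τ (oprod c (j + 1) l) := by
  unfold betaC Qf
  rw [oprod_cons c hj]
  simp only [map_mul, map_inv]
  group

lemma oprod_betaC (τ : U ≃* U) (l : ℕ) (c : ℕ → U) {j : ℕ} (hj : j ≤ l) :
    oprod (betaC τ l c) j l = (τ (oprod c j l))⁻¹ := by
  rw [oprod_telescope (betaC τ l c) (fun k => τ (oprod c k l)) (l - j) j l (by omega)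
    (fun k _ hk2 => betaC_eq τ l c hk2)]
  simp [oprod_eq_one c (le_refl l)]

lemma Qf_beta (τ : U ≃* U) (l : ℕ) (c : ℕ → U) (j : ℕ) :
    Qf l (betaC τ l c) j = (τ (Qf l c j))⁻¹ := by
  unfold Qf
  by_cases h : j + 1 ≤ l
  · exact oprod_betaC τ l c h
  · rw [oprod_eq_one _ (by omega), oprod_eq_one c (by omega)]; simp

lemma comm_beta (τ : U ≃* U) (g l : ℕ) (a b c : ℕ → U) {i : ℕ} (hi : i < g) :
    gcomm (betaA τ g l a b c i) (betaB τ g l a b c i)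
      = (τ (oprod (fun k => gcomm (a k) (b k)) i g) * τ (oprod c 0 l))⁻¹ *
        (τ (oprod (fun k => gcomm (a k) (b k)) (i + 1) g) * τ (oprod c 0 l)) := by
  rw [oprod_cons _ hi]
  unfold betaA betaB Pf gcomm
  simp only [map_mul, map_inv]
  group

lemma oprod_comm_beta (τ : U ≃* U) (g l : ℕ) (a b c : ℕ → U) {i : ℕ} (hi : i ≤ g) :
    oprod (fun k => gcomm (betaA τ g l a b c k) (betaB τ g l a b c k)) i g
      = (τ (oprod (fun k => gcomm (a k) (b k)) i g) * τ (oprod c 0 l))⁻¹ *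
        τ (oprod c 0 l) := by
  rw [oprod_telescope _
      (fun k => τ (oprod (fun k => gcomm (a k) (b k)) k g) * τ (oprod c 0 l))
      (g - i) i g (by omega) (fun k _ hk2 => comm_beta τ g l a b c hk2)]
  simp [oprod_eq_one (fun k => gcomm (a k) (b k)) (le_refl g)]

lemma Pf_beta (τ : U ≃* U) (g l : ℕ) (a b c : ℕ → U) (i : ℕ) :
    Pf g l (betaA τ g l a b c) (betaB τ g l a b c) (betaC τ l c) i
      = (τ (Pf g l a b c i))⁻¹ := by
  unfold Pf
  rw [oprod_betaC τ l c (Nat.zero_le l)]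
  by_cases h : i + 1 ≤ g
  · rw [oprod_comm_beta τ g l a b c h, map_mul]
    group
  · rw [oprod_eq_one _ (by omega), oprod_eq_one (fun k => gcomm (a k) (b k)) (by omega),
      map_mul]
    simp

end Aux

/-- The map `β` on `U^{2g+l}` is an involution, is compatible with the
simultaneous-conjugation action of `U` (twisted by `τ`), and satisfies
`μ ∘ β = τ⁻ ∘ μ`. -/
theorem beta_involutive_compatible [Group U] (τ : U ≃* U)
    (hτ : ∀ u : U, τ (τ u) = u) (g l : ℕ) (a b c : ℕ → U) :
    (∀ i, i < g →
      betaA τ g l (betaA τ g l a b c) (betaB τ g l a b c) (betaC τ l c) i = a i) ∧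
    (∀ i, i < g →
      betaB τ g l (betaA τ g l a b c) (betaB τ g l a b c) (betaC τ l c) i = b i) ∧
    (∀ j, j < l → betaC τ l (betaC τ l c) j = c j) ∧
    (∀ u : U, ∀ i, i < g →
      betaA τ g l (fun k => u * a k * u⁻¹) (fun k => u * b k * u⁻¹)
          (fun k => u * c k * u⁻¹) i
        = τ u * betaA τ g l a b c i * (τ u)⁻¹) ∧
    (∀ u : U, ∀ i, i < g →
      betaB τ g l (fun k => u * a k * u⁻¹) (fun k => u * b k * u⁻¹)
          (fun k => u * c k * u⁻¹) i
        = τ u * betaB τ g l a b c i * (τ u)⁻¹) ∧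
    (∀ u : U, ∀ j, j < l →
      betaC τ l (fun k => u * c k * u⁻¹) j
        = τ u * betaC τ l c j * (τ u)⁻¹) ∧
    muMap g l (betaA τ g l a b c) (betaB τ g l a b c) (betaC τ l c)
      = τ (muMap g l a b c)⁻¹ := by
  refine ⟨?_, ?_, ?_, ?_, ?_, ?_, ?_⟩
  · intro i hi
    simp only [betaA, betaB]
    rw [Pf_beta]
    simp only [map_mul, map_inv, hτ]
    group
  · intro i hi
    simp only [betaA, betaB]
    rw [Pf_beta]
    simp only [map_mul, map_inv, hτ]
    group
  · intro j hj
    simp only [betaC]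
    rw [Qf_beta]
    simp only [map_mul, map_inv, hτ]
    group
  · intro u i hi
    simp only [betaA]
    rw [Pf_conj]
    simp only [map_mul, map_inv]
    group
  · intro u i hi
    simp only [betaB]
    rw [Pf_conj]
    simp only [map_mul, map_inv]
    group
  · intro u j hj
    simp only [betaC]
    rw [Qf_conj]
    simp only [map_mul, map_inv]
    group
  · unfold muMap
    rw [oprod_comm_beta τ g l a b c (Nat.zero_le g), oprod_betaC τ l c (Nat.zero_le l)]
    simp only [map_inv, map_mul]
    group


end Stmt9
end

section
/- Let U be a group, τ : U → U an involutive automorphism, and T ⊆ U a commutative subgroup with τ(t⁻¹) = t for all t ∈ T. Let β : U^{2g+l} → U^{2g+l} be the map of the context and μ(a,b,c) := [a₁,b₁]⋯[a_g,b_g]·c₁⋯c_l. Then for any r₁,…,r_g ∈ T and t₁,…,t_l ∈ T, the tuple x := (r₁, τ(r₁), r₂, τ(r₂), …, r_g, τ(r_g), t₁, …, t_l) satisfies β(x) = x and μ(x) = t₁⋯t_l ∈ T. -/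
namespace Stmt10

variable {U : Type*}

/-- The commutator `[a,b] = a b a⁻¹ b⁻¹`. -/
def gcomm [Group U] (a b : U) : U := a * b * a⁻¹ * b⁻¹

/-- Ordered product `f i * f (i+1) * ⋯ * f (n-1)`. -/
def oprod [Monoid U] (f : ℕ → U) (i n : ℕ) : U := ((List.range' i (n - i)).map f).prod

/-- `P_i = [a_{i+1},b_{i+1}] ⋯ [a_g,b_g] · c₁ ⋯ c_l` (0-based indices). -/
def Pf [Group U] (g l : ℕ) (a b c : ℕ → U) (i : ℕ) : U :=
  oprod (fun k => gcomm (a k) (b k)) (i + 1) g * oprod c 0 l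

/-- `Q_j = c_{j+1} ⋯ c_l` (0-based indices). -/
def Qf [Monoid U] (l : ℕ) (c : ℕ → U) (j : ℕ) : U := oprod c (j + 1) l

/-- The `aᵢ`-component of the involution `β`: `a′_i = τ(P_i)⁻¹ τ(b_i) τ(P_i)`. -/
def betaA [Group U] (τ : U ≃* U) (g l : ℕ) (a b c : ℕ → U) (i : ℕ) : U :=
  (τ (Pf g l a b c i))⁻¹ * τ (b i) * τ (Pf g l a b c i)

/-- The `bᵢ`-component of the involution `β`: `b′_i = τ(P_i)⁻¹ τ(a_i) τ(P_i)`. -/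
def betaB [Group U] (τ : U ≃* U) (g l : ℕ) (a b c : ℕ → U) (i : ℕ) : U :=
  (τ (Pf g l a b c i))⁻¹ * τ (a i) * τ (Pf g l a b c i)

/-- The `cⱼ`-component of the involution `β`: `c′_j = τ(Q_j)⁻¹ τ(c_j⁻¹) τ(Q_j)`. -/
def betaC [Group U] (τ : U ≃* U) (l : ℕ) (c : ℕ → U) (j : ℕ) : U :=
  (τ (Qf l c j))⁻¹ * τ (c j)⁻¹ * τ (Qf l c j)

/-- The momentum map `μ(a,b,c) = [a₁,b₁]⋯[a_g,b_g]·c₁⋯c_l`. -/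
def muMap [Group U] (g l : ℕ) (a b c : ℕ → U) : U :=
  oprod (fun k => gcomm (a k) (b k)) 0 g * oprod c 0 l

/-- A tuple `(a₁,b₁,…,a_g,b_g,c₁,…,c_l)` is decomposable: there are
`v₁,…,v_g,w₁,…,w_l ∈ Fix(τ⁻)` (encoded as the single cyclic list
`s 0,…,s (g+l-1)`, with `v_i = s (i-1)`, `w_j = s (g+j-1)`, and the cyclic
conventions `v_{g+1} := w₁`, `w_{l+1} := v₁` realized by reduction mod `g+l`)
with `[a_i,b_i] = v_i v_{i+1}⁻¹`, `c_j = w_j w_{j+1}⁻¹`, and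
`τ(a_i) = v_{i+1}⁻¹ b_i v_{i+1}`. -/
def Decomposable [Group U] (τ : U ≃* U) (g l : ℕ) (a b c : ℕ → U) : Prop :=
  ∃ s : ℕ → U,
    (∀ k, k < g + l → τ (s k)⁻¹ = s k) ∧
    (∀ i, i < g → gcomm (a i) (b i) = s i * (s ((i + 1) % (g + l)))⁻¹) ∧
    (∀ j, j < l → c j = s (g + j) * (s ((g + j + 1) % (g + l)))⁻¹) ∧
    (∀ i, i < g → τ (a i) = (s ((i + 1) % (g + l)))⁻¹ * b i * s ((i + 1) % (g + l)))


lemma oprod_mem [Group U] (T : Subgroup U) (f : ℕ → U) (i n : ℕ)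
    (h : ∀ k, i ≤ k → k < n → f k ∈ T) : oprod f i n ∈ T := by
  apply Subgroup.list_prod_mem
  intro x hx
  simp only [List.mem_map, List.mem_range'_1] at hx
  obtain ⟨k, ⟨h1, h2⟩, rfl⟩ := hx
  exact h k h1 (by omega)

lemma oprod_eq_one [Group U] (f : ℕ → U) (i n : ℕ)
    (h : ∀ k, i ≤ k → k < n → f k = 1) : oprod f i n = 1 := by
  apply List.prod_eq_one
  intro x hx
  simp only [List.mem_map, List.mem_range'_1] at hx
  obtain ⟨k, ⟨h1, h2⟩, rfl⟩ := hx
  exact h k h1 (by omega)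

/-- If `T` is a commutative subgroup pointwise fixed by `τ⁻`, then for
`r₁,…,r_g, t₁,…,t_l ∈ T` the tuple `(r₁,τ(r₁),…,r_g,τ(r_g),t₁,…,t_l)` is
fixed by `β` and its momentum-map value is `t₁⋯t_l ∈ T`. -/
theorem beta_fixes_torus_tuple [Group U] (τ : U ≃* U)
    (hτ : ∀ u : U, τ (τ u) = u)
    (T : Subgroup U) (hcomm : ∀ x ∈ T, ∀ y ∈ T, x * y = y * x)
    (hT : ∀ t ∈ T, τ t⁻¹ = t)
    (g l : ℕ) (r t : ℕ → U) (hr : ∀ i, i < g → r i ∈ T)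
    (ht : ∀ j, j < l → t j ∈ T) :
    (∀ i, i < g → betaA τ g l r (fun k => τ (r k)) t i = r i) ∧
    (∀ i, i < g → betaB τ g l r (fun k => τ (r k)) t i = τ (r i)) ∧
    (∀ j, j < l → betaC τ l t j = t j) ∧
    muMap g l r (fun k => τ (r k)) t = oprod t 0 l ∧
    oprod t 0 l ∈ T := by
  have htauT : ∀ x ∈ T, τ x = x⁻¹ := by
    intro x hx
    have := congrArg τ (hT x hx)
    rw [hτ] at this
    rw [← this]
  set S := oprod t 0 l with hSdef
  have hS : S ∈ T := oprod_mem T t 0 l (fun k _ hk => ht k hk)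
  have hPf : ∀ i, Pf g l r (fun k => τ (r k)) t i = S := by
    intro i
    unfold Pf
    rw [oprod_eq_one, one_mul]
    intro k hk1 hk2
    have hrk := hr k hk2
    show r k * τ (r k) * (r k)⁻¹ * (τ (r k))⁻¹ = 1
    rw [htauT _ hrk]
    group
  have hQ : ∀ j, Qf l t j ∈ T := fun j => oprod_mem T t _ l (fun k _ hk => ht k hk)
  refine ⟨?_, ?_, ?_, ?_, hS⟩
  · intro i hi
    have hri := hr i hi
    rw [betaA, hPf, htauT _ hS, hτ, inv_inv, hcomm _ hS _ hri]
    group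
  · intro i hi
    have hri := hr i hi
    have : τ (r i) ∈ T := by rw [htauT _ hri]; exact inv_mem hri
    rw [betaB, hPf, htauT _ hS, inv_inv, hcomm _ hS _ this]
    group
  · intro j hj
    have htj := ht j hj
    have hQj := hQ j
    rw [betaC, htauT _ hQj, map_inv, htauT _ htj, inv_inv, inv_inv,
      hcomm _ hQj _ htj]
    group
  · rw [muMap, oprod_eq_one, one_mul]
    intro k hk1 hk2
    show r k * τ (r k) * (r k)⁻¹ * (τ (r k))⁻¹ = 1
    rw [htauT _ (hr k hk2)]
    group


end Stmt10
end

section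
/- Let π : Ũ → U be a group homomorphism, τ : U → U and τ̃ : Ũ → Ũ involutive automorphisms with π ∘ τ̃ = τ ∘ π. Let M be a set with a U-action, μ : M → U an equivariant map (μ(u·x) = uμ(x)u⁻¹), and β : M → M an involution with β(u·x) = τ(u)·β(x) and μ(β(x)) = τ(μ(x)⁻¹) for all u, x. Set M̃ := {(x, ũ) ∈ M × Ũ : μ(x) = π(ũ)}, let Ũ act by ũ₀·(x, ũ) := (π(ũ₀)·x, ũ₀ ũ ũ₀⁻¹), and let μ̃(x, ũ) := ũ. Then: (1) M̃ is stable under this Ũ-action; (2) the map β̃(x, ũ) := (β(x), τ̃(ũ⁻¹)) sends M̃ into M̃; (3) β̃ is an involution on M̃; (4) β̃(ũ₀·y) = τ̃(ũ₀)·β̃(y) for all ũ₀ ∈ Ũ and y ∈ M̃; and (5) μ̃(β̃(y)) = τ̃(μ̃(y)⁻¹) for all y ∈ M̃. -/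
namespace Stmt11

variable {Ut U M : Type*} [Group Ut] [Group U] [MulAction U M]

/-- The fiber product `M̃ = M ×_U Ũ = {(x, ũ) | μ(x) = π(ũ)}`. -/
def Mt (π : Ut →* U) (μ : M → U) : Set (M × Ut) := {p | μ p.1 = π p.2}

/-- The `Ũ`-action `ũ₀ · (x, ũ) = (π(ũ₀) · x, ũ₀ ũ ũ₀⁻¹)` on `M × Ũ`. -/
def act (π : Ut →* U) (u₀ : Ut) (p : M × Ut) : M × Ut :=
  (π u₀ • p.1, u₀ * p.2 * u₀⁻¹)

/-- The lifted involution `β̃(x, ũ) = (β(x), τ̃(ũ⁻¹))`. -/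
def βt (τt : Ut ≃* Ut) (β : M → M) (p : M × Ut) : M × Ut :=
  (β p.1, τt p.2⁻¹)

/-- Lifting a compatible involution through a covering-type homomorphism
`π : Ũ → U`: the fiber product `M̃` is stable under the `Ũ`-action and under
`β̃`, and `β̃` is an involution on `M̃` compatible with `τ̃` and with the lifted
momentum map `μ̃(x, ũ) = ũ`. -/
theorem lifted_involution (π : Ut →* U) (τ : U ≃* U) (τt : Ut ≃* Ut)
    (hτ : ∀ u : U, τ (τ u) = u) (hτt : ∀ u : Ut, τt (τt u) = u)
    (hπτ : ∀ u : Ut, π (τt u) = τ (π u))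
    (μ : M → U) (hequiv : ∀ (u : U) (x : M), μ (u • x) = u * μ x * u⁻¹)
    (β : M → M) (hβ : ∀ x, β (β x) = x)
    (hc : ∀ (u : U) (x : M), β (u • x) = τ u • β x)
    (hμβ : ∀ x : M, μ (β x) = τ (μ x)⁻¹) :
    (∀ (u₀ : Ut), ∀ p ∈ Mt π μ, act π u₀ p ∈ Mt π μ) ∧
    (∀ p ∈ Mt π μ, βt τt β p ∈ Mt π μ) ∧
    (∀ p ∈ Mt π μ, βt τt β (βt τt β p) = p) ∧
    (∀ (u₀ : Ut), ∀ p ∈ Mt π μ,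
      βt τt β (act π u₀ p) = act π (τt u₀) (βt τt β p)) ∧
    (∀ p ∈ Mt π μ, (βt τt β p).2 = τt (p.2)⁻¹) := by
  refine ⟨?_, ?_, ?_, ?_, ?_⟩
  · intro u₀ p hp
    simp only [Mt, Set.mem_setOf_eq, act] at hp ⊢
    rw [hequiv, hp]; simp [mul_assoc]
  · intro p hp
    simp only [Mt, Set.mem_setOf_eq, βt] at hp ⊢
    rw [hμβ, hp, hπτ]; simp
  · intro p hp
    simp only [βt, hβ]
    rw [← map_inv, inv_inv, hτt]
  · intro u₀ p hp
    simp only [βt, act]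
    refine Prod.ext ?_ ?_
    · simp only [hc, hπτ]
    · simp only [mul_inv_rev, inv_inv, map_mul, mul_assoc, map_inv]
  · intro p hp; rfl

end Stmt11
end

section
/- Let U be a group, τ : U → U an involutive automorphism, and d ∈ U such that every element z of the centralizer Z_U(d) satisfies τ(z⁻¹) = z. Let ψ ∈ U and set c := ψ⁻¹ d ψ. If φ ∈ U satisfies τ(c⁻¹) = φ c φ⁻¹, then τ(φ⁻¹) = φ. -/
/-- If every element of the centralizer of `d` is symmetric (`τ(z⁻¹) = z`)
and `c = ψ⁻¹ d ψ`, then any `φ` with `τ(c⁻¹) = φ c φ⁻¹` is symmetric: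
`τ(φ⁻¹) = φ`. -/
theorem conjugator_is_symmetric {U : Type*} [Group U]
    (τ : U ≃* U) (hτ : ∀ u : U, τ (τ u) = u)
    (d : U) (hd : ∀ z : U, z * d = d * z → τ z⁻¹ = z)
    (ψ φ : U)
    (h : τ (ψ⁻¹ * d * ψ)⁻¹ = φ * (ψ⁻¹ * d * ψ) * φ⁻¹) :
    τ φ⁻¹ = φ := by
  have hdd : τ d⁻¹ = d := hd d rfl
  have h' : (τ ψ)⁻¹ * (d * τ ψ) = φ * (ψ⁻¹ * (d * (ψ * φ⁻¹))) := by
    have := h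
    simp only [mul_inv_rev, map_mul, map_inv, hdd, inv_inv] at this
    simpa [mul_assoc] using this
  have hg : (τ ψ * φ * ψ⁻¹) * d = d * (τ ψ * φ * ψ⁻¹) := by
    have := congrArg (fun x => τ ψ * x * (φ * ψ⁻¹)) h'
    simpa [mul_assoc] using this.symm
  have hz := hd _ hg
  have : τ ψ * (τ φ⁻¹ * ψ⁻¹) = τ ψ * (φ * ψ⁻¹) := by
    simpa [mul_assoc, map_mul, map_inv, hτ] using hz
  have := mul_left_cancel this
  exact mul_right_cancel this
end
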